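/- For every polynomial P ∈ A[X_1, …, X_N] and every ε ∈ {0,1}^N, the coordinate of the image of P in 𝒜_D on the basis element x^ε equals T^ε(P); that is, if the image of P in 𝒜_D is written (uniquely) as Σ_ε P^ε x^ε with P^ε ∈ A, then P^ε = T^ε(P). In particular, the structure constants of 𝒜_D are given by q_{ε₁,ε₂}^{ε} = T^ε(X^{ε₁}·X^{ε₂}), where x^{ε₁}x^{ε₂} = Σ_ε q_{ε₁,ε₂}^{ε} x^ε. -/
import Mathlib


open MvPolynomial

/-- The relation `Q_k = X_k² − d_{k,k}X_k − Σ_{l<k} d_{l,k}X_lX_k`. -/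
noncomputable def Qrel {A : Type*} [CommRing A] {N : ℕ} (d : Fin N → Fin N → A)
    (k : Fin N) : MvPolynomial (Fin N) A :=
  X k ^ 2 - C (d k k) * X k
    - ∑ l ∈ Finset.univ.filter (fun l => l < k), C (d l k) * (X l * X k)

/-- The algebra `𝒜_D = A[X_1,…,X_N]/⟨Q_1,…,Q_N⟩`. -/
abbrev AlgD {A : Type*} [CommRing A] {N : ℕ} (d : Fin N → Fin N → A) : Type _ :=
  MvPolynomial (Fin N) A ⧸ Ideal.span (Set.range (Qrel d))

/-- `x_i`, the image of `X_i` in `𝒜_D`. -/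
noncomputable def xD {A : Type*} [CommRing A] {N : ℕ} (d : Fin N → Fin N → A)
    (i : Fin N) : AlgD d :=
  Ideal.Quotient.mk _ (X i)

/-- `x^ε = Π_{i : ε_i = 1} x_i` in `𝒜_D`. -/
noncomputable def xPowD {A : Type*} [CommRing A] {N : ℕ} (d : Fin N → Fin N → A)
    (ε : Fin N → Bool) : AlgD d :=
  ∏ i ∈ Finset.univ.filter (fun i => ε i = true), xD d i

/-- `X^ε = Π_{i : ε_i = 1} X_i` in `A[X_1,…,X_N]`. -/
noncomputable def XPow {A : Type*} [CommRing A] {N : ℕ} (ε : Fin N → Bool) :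
    MvPolynomial (Fin N) A :=
  ∏ i ∈ Finset.univ.filter (fun i => ε i = true), X i

/-- Fuel-based implementation of the `A`-linear functionals `T^ε` on `A[X_1,…,X_N]`.
When the fuel equals the number of indices `i` with `ε i = 1`, it computes `T^ε`:
working on each monomial separately (linearity), it returns the constant coefficient
when `ε = 0`; it returns `0` on monomials involving a variable outside the support of
`ε` or not involving the top variable `i_l` of the support of `ε`; and it implements
the recursion `T^ε(Q·X_{i_l}^s) = T^{ε−(i_l)}(Q·(d_{i_l,i_l} + Σ_{j<l}
d_{i_j,i_l}X_{i_j})^{s−1})`. -/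
noncomputable def TcoefAux {A : Type*} [CommRing A] {N : ℕ} (d : Fin N → Fin N → A) :
    ℕ → (Fin N → Bool) → MvPolynomial (Fin N) A → A
  | 0, _, P => P.coeff 0
  | n + 1, ε, P =>
    if h : (Finset.univ.filter (fun i => ε i = true)).Nonempty then
      let i := (Finset.univ.filter (fun i => ε i = true)).max' h
      ∑ m ∈ P.support,
        if (∀ j, ε j = false → m j = 0) ∧ 1 ≤ m i then
          P.coeff m *
            TcoefAux d n (Function.update ε i false)
              (monomial (Finsupp.erase i m) 1 *
                (C (d i i)
                  + ∑ j ∈ Finset.univ.filter (fun j => ε j = true ∧ j < i),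
                      C (d j i) * X j) ^ (m i - 1))
        else 0
    else P.coeff 0

/-- The `A`-linear functional `T^ε : A[X_1,…,X_N] → A`. -/
noncomputable def Tcoef {A : Type*} [CommRing A] {N : ℕ} (d : Fin N → Fin N → A)
    (ε : Fin N → Bool) (P : MvPolynomial (Fin N) A) : A :=
  TcoefAux d (Finset.univ.filter (fun i => ε i = true)).card ε P

section Aux
variable {A : Type*} [CommRing A] {N : ℕ} (d : Fin N → Fin N → A)

/-- The support of `ε`. -/
abbrev suppE (ε : Fin N → Bool) : Finset (Fin N) :=
  Finset.univ.filter (fun i => ε i = true)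

/-- The restricted auxiliary polynomial. -/
noncomputable abbrev Brestr (ε : Fin N → Bool) (i : Fin N) : MvPolynomial (Fin N) A :=
  C (d i i) + ∑ j ∈ Finset.univ.filter (fun j => ε j = true ∧ j < i), C (d j i) * X j

/-- The full auxiliary polynomial. -/
noncomputable abbrev Bfull (i : Fin N) : MvPolynomial (Fin N) A :=
  C (d i i) + ∑ l ∈ Finset.univ.filter (fun l => l < i), C (d l i) * X l

lemma sum_support_monomial (m : Fin N →₀ ℕ) (f : (Fin N →₀ ℕ) → A) :
    ∑ m' ∈ (monomial m (1:A)).support, (monomial m (1:A)).coeff m' * f m' = f m := by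
  nontriviality A
  classical
  rw [support_monomial, if_neg one_ne_zero, Finset.sum_singleton, coeff_monomial, if_pos rfl,
    one_mul]

lemma coeff_zero_expand (P : MvPolynomial (Fin N) A) :
    P.coeff 0 = ∑ m ∈ P.support, P.coeff m * (monomial m (1:A)).coeff 0 := by
  rw [Finset.sum_congr rfl (fun m _ => by rw [coeff_monomial])]
  simp only [mul_ite, mul_one, mul_zero]
  rw [Finset.sum_ite_eq' P.support 0 (fun m => P.coeff m)]
  split
  · rfl
  · exact MvPolynomial.notMem_support_iff.1 (by assumption)

lemma TcoefAux_succ (n : ℕ) (ε : Fin N → Bool) (P : MvPolynomial (Fin N) A)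
    (h : (suppE ε).Nonempty) :
    TcoefAux d (n+1) ε P =
      ∑ m ∈ P.support,
        if (∀ j, ε j = false → m j = 0) ∧ 1 ≤ m ((suppE ε).max' h) then
          P.coeff m *
            TcoefAux d n (Function.update ε ((suppE ε).max' h) false)
              (monomial (Finsupp.erase ((suppE ε).max' h) m) 1 *
                (Brestr d ε ((suppE ε).max' h)) ^ (m ((suppE ε).max' h) - 1))
        else 0 := by
  rw [TcoefAux, dif_pos h]

lemma TcoefAux_succ_monomial (n : ℕ) (ε : Fin N → Bool) (m : Fin N →₀ ℕ)
    (h : (suppE ε).Nonempty) :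
    TcoefAux d (n+1) ε (monomial m 1) =
      if (∀ j, ε j = false → m j = 0) ∧ 1 ≤ m ((suppE ε).max' h) then
        TcoefAux d n (Function.update ε ((suppE ε).max' h) false)
          (monomial (Finsupp.erase ((suppE ε).max' h) m) 1 *
            (Brestr d ε ((suppE ε).max' h)) ^ (m ((suppE ε).max' h) - 1))
      else 0 := by
  rw [TcoefAux_succ d n ε _ h]
  have : ∀ m' ∈ (monomial m (1:A)).support,
      (if (∀ j, ε j = false → m' j = 0) ∧ 1 ≤ m' ((suppE ε).max' h) then
        (monomial m (1:A)).coeff m' *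
          TcoefAux d n (Function.update ε ((suppE ε).max' h) false)
            (monomial (Finsupp.erase ((suppE ε).max' h) m') 1 *
              (Brestr d ε ((suppE ε).max' h)) ^ (m' ((suppE ε).max' h) - 1))
      else 0)
      = (monomial m (1:A)).coeff m' *
        (if (∀ j, ε j = false → m' j = 0) ∧ 1 ≤ m' ((suppE ε).max' h) then
          TcoefAux d n (Function.update ε ((suppE ε).max' h) false)
            (monomial (Finsupp.erase ((suppE ε).max' h) m') 1 *
              (Brestr d ε ((suppE ε).max' h)) ^ (m' ((suppE ε).max' h) - 1))
        else 0) := by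
    intro m' _
    split <;> simp
  rw [Finset.sum_congr rfl this]
  exact sum_support_monomial m _

lemma TcoefAux_monomial_expand (n : ℕ) (ε : Fin N → Bool) (P : MvPolynomial (Fin N) A) :
    TcoefAux d n ε P = ∑ m ∈ P.support, P.coeff m * TcoefAux d n ε (monomial m 1) := by
  match n with
  | 0 => exact coeff_zero_expand P
  | n + 1 =>
    by_cases h : (suppE ε).Nonempty
    · rw [TcoefAux_succ d n ε P h]
      refine Finset.sum_congr rfl (fun m _ => ?_)
      rw [TcoefAux_succ_monomial d n ε m h, mul_ite, mul_zero]
    · rw [TcoefAux, dif_neg h]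
      rw [Finset.sum_congr rfl (fun m _ => by rw [TcoefAux, dif_neg h])]
      exact coeff_zero_expand P

lemma suppE_update_false (ε : Fin N → Bool) (i : Fin N) :
    suppE (Function.update ε i false) = (suppE ε).erase i := by
  ext j
  rcases eq_or_ne j i with rfl | hj
  · simp [Function.update_self]
  · simp [Function.update_of_ne hj, hj]

lemma card_suppE_update (ε : Fin N → Bool) (i : Fin N) (hi : ε i = true) :
    (suppE ε).card = (suppE (Function.update ε i false)).card + 1 := by
  rw [suppE_update_false, Finset.card_erase_of_mem (by simp [hi])]
  have : 0 < (suppE ε).card := Finset.card_pos.2 ⟨i, by simp [hi]⟩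
  omega

lemma Tcoef_monomial_step (ε : Fin N → Bool) (m : Fin N →₀ ℕ) (h : (suppE ε).Nonempty)
    (hsub : ∀ j, ε j = false → m j = 0) (hι : 1 ≤ m ((suppE ε).max' h)) :
    Tcoef d ε (monomial m 1) =
      Tcoef d (Function.update ε ((suppE ε).max' h) false)
        (monomial (Finsupp.erase ((suppE ε).max' h) m) 1 *
          (Brestr d ε ((suppE ε).max' h)) ^ (m ((suppE ε).max' h) - 1)) := by
  have hi : ε ((suppE ε).max' h) = true := by
    have := (suppE ε).max'_mem h
    simpa using this
  have hcard := card_suppE_update ε ((suppE ε).max' h) hi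
  rw [Tcoef, Tcoef, hcard, TcoefAux_succ_monomial d _ ε m h, if_pos ⟨hsub, hι⟩]

lemma Tcoef_monomial_eq_zero_of_not_subset (ε : Fin N → Bool) (m : Fin N →₀ ℕ)
    (j : Fin N) (hj : ε j = false) (hmj : m j ≠ 0) :
    Tcoef d ε (monomial m 1) = 0 := by
  by_cases h : (suppE ε).Nonempty
  · obtain ⟨n, hn⟩ : ∃ n, (suppE ε).card = n + 1 :=
      ⟨(suppE ε).card - 1, by have := Finset.card_pos.2 h; omega⟩
    rw [Tcoef, hn, TcoefAux_succ_monomial d n ε m h, if_neg]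
    rintro ⟨h1, -⟩
    exact hmj (h1 j hj)
  · rw [Tcoef, Finset.card_eq_zero.2 (Finset.not_nonempty_iff_eq_empty.1 h), TcoefAux]
    classical
    rw [coeff_monomial, if_neg]
    intro hm0
    exact hmj (by simp [hm0])

lemma Tcoef_monomial_eq_zero_of_top (ε : Fin N → Bool) (m : Fin N →₀ ℕ)
    (h : (suppE ε).Nonempty) (hm : m ((suppE ε).max' h) = 0) :
    Tcoef d ε (monomial m 1) = 0 := by
  obtain ⟨n, hn⟩ : ∃ n, (suppE ε).card = n + 1 :=
    ⟨(suppE ε).card - 1, by have := Finset.card_pos.2 h; omega⟩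
  rw [Tcoef, hn, TcoefAux_succ_monomial d n ε m h, if_neg]
  rintro ⟨-, h2⟩
  omega

lemma Tcoef_eq_sum_subset (ε : Fin N → Bool) (P : MvPolynomial (Fin N) A)
    (S : Finset (Fin N →₀ ℕ)) (hS : P.support ⊆ S) :
    Tcoef d ε P = ∑ m ∈ S, P.coeff m * Tcoef d ε (monomial m 1) := by
  rw [Tcoef, TcoefAux_monomial_expand]
  exact Finset.sum_subset hS (fun m _ hm => by
    rw [MvPolynomial.notMem_support_iff.1 hm, zero_mul])

lemma Tcoef_add (ε : Fin N → Bool) (P Q : MvPolynomial (Fin N) A) :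
    Tcoef d ε (P + Q) = Tcoef d ε P + Tcoef d ε Q := by
  classical
  rw [Tcoef_eq_sum_subset d ε (P + Q) (P.support ∪ Q.support)
        (MvPolynomial.support_add),
      Tcoef_eq_sum_subset d ε P (P.support ∪ Q.support) Finset.subset_union_left,
      Tcoef_eq_sum_subset d ε Q (P.support ∪ Q.support) Finset.subset_union_right,
      ← Finset.sum_add_distrib]
  exact Finset.sum_congr rfl fun m _ => by rw [coeff_add, add_mul]

lemma Tcoef_sub (ε : Fin N → Bool) (P Q : MvPolynomial (Fin N) A) :
    Tcoef d ε (P - Q) = Tcoef d ε P - Tcoef d ε Q := by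
  classical
  rw [Tcoef_eq_sum_subset d ε (P - Q) (P.support ∪ Q.support)
        (by simpa using MvPolynomial.support_sub (Fin N) P Q),
      Tcoef_eq_sum_subset d ε P (P.support ∪ Q.support) Finset.subset_union_left,
      Tcoef_eq_sum_subset d ε Q (P.support ∪ Q.support) Finset.subset_union_right,
      ← Finset.sum_sub_distrib]
  exact Finset.sum_congr rfl fun m _ => by rw [coeff_sub, sub_mul]

lemma Tcoef_C_mul (ε : Fin N → Bool) (a : A) (P : MvPolynomial (Fin N) A) :
    Tcoef d ε (C a * P) = a * Tcoef d ε P := by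
  classical
  have hsupp : (C a * P).support ⊆ P.support := by
    rw [← MvPolynomial.smul_eq_C_mul]
    exact MvPolynomial.support_smul
  rw [Tcoef_eq_sum_subset d ε (C a * P) P.support hsupp,
      Tcoef_eq_sum_subset d ε P P.support (subset_refl _), Finset.mul_sum]
  exact Finset.sum_congr rfl fun m _ => by rw [coeff_C_mul, mul_assoc]

lemma Tcoef_mul_X_eq_zero (ε : Fin N → Bool) (l : Fin N) (hl : ε l = false)
    (Q : MvPolynomial (Fin N) A) : Tcoef d ε (X l * Q) = 0 := by
  classical
  rw [Tcoef_eq_sum_subset d ε (X l * Q) _ (subset_refl _)]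
  refine Finset.sum_eq_zero fun m _ => ?_
  by_cases hml : m l = 0
  · rw [coeff_X_mul' m l Q, if_neg (by simp [Finsupp.mem_support_iff, hml]), zero_mul]
  · rw [Tcoef_monomial_eq_zero_of_not_subset d ε m l hl hml, mul_zero]

lemma Tcoef_monomial_mul_eq_zero (ε : Fin N → Bool) (m : Fin N →₀ ℕ) (l : Fin N)
    (hl : ε l = false) (hm : m l ≠ 0) (Q : MvPolynomial (Fin N) A) :
    Tcoef d ε (monomial m 1 * Q) = 0 := by
  have hle : Finsupp.single l 1 ≤ m := Finsupp.single_le_iff.2 (by omega)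
  obtain ⟨m₀, rfl⟩ : ∃ m₀, m₀ + Finsupp.single l 1 = m :=
    ⟨m - Finsupp.single l 1, tsub_add_cancel_of_le hle⟩
  rw [monomial_add_single, pow_one]
  have : monomial m₀ (1:A) * X l * Q = X l * (monomial m₀ 1 * Q) := by ring
  rw [this]
  exact Tcoef_mul_X_eq_zero d ε l hl _

/-- All variables occurring in `P` are `< k`. -/
def VarsLT (k : Fin N) (P : MvPolynomial (Fin N) A) : Prop :=
  ∀ m ∈ P.support, ∀ j : Fin N, k ≤ j → m j = 0

lemma Tcoef_eq_zero_of_varsLT (ε : Fin N → Bool) (k j0 : Fin N) (hε : ε j0 = true)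
    (hj0 : k ≤ j0) (Q : MvPolynomial (Fin N) A) (hQ : VarsLT k Q) :
    Tcoef d ε Q = 0 := by
  have h : (suppE ε).Nonempty := ⟨j0, by simp [hε]⟩
  rw [Tcoef_eq_sum_subset d ε Q _ (subset_refl _)]
  refine Finset.sum_eq_zero fun m hm => ?_
  have hka : k ≤ (suppE ε).max' h := le_trans hj0 (Finset.le_max' _ j0 (by simp [hε]))
  rw [Tcoef_monomial_eq_zero_of_top d ε m h (hQ m hm _ hka), mul_zero]

end Aux

section Quot
variable {A : Type*} [CommRing A] {N : ℕ} (d : Fin N → Fin N → A)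

lemma varsLT_monomial (k : Fin N) (m : Fin N →₀ ℕ) (a : A)
    (hm : ∀ j : Fin N, k ≤ j → m j = 0) : VarsLT k (monomial m a) := by
  classical
  intro m' hm' j hj
  rw [support_monomial] at hm'
  split at hm'
  · simp at hm'
  · rw [Finset.mem_singleton] at hm'
    subst hm'
    exact hm j hj

lemma varsLT_C (k : Fin N) (a : A) : VarsLT k (C a) := by
  rw [MvPolynomial.C_apply]
  exact varsLT_monomial k 0 a (by simp)

lemma varsLT_X (k j : Fin N) (hj : j < k) : VarsLT k (X j : MvPolynomial (Fin N) A) := by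
  rw [MvPolynomial.X]
  refine varsLT_monomial k _ 1 (fun j' hj' => ?_)
  rw [Finsupp.single_apply, if_neg]
  intro hjj'
  subst hjj'
  omega

lemma varsLT_add (k : Fin N) (P Q : MvPolynomial (Fin N) A) (hP : VarsLT k P)
    (hQ : VarsLT k Q) : VarsLT k (P + Q) := by
  intro m hm j hj
  rcases Finset.mem_union.1 (MvPolynomial.support_add hm) with h | h
  · exact hP m h j hj
  · exact hQ m h j hj

lemma varsLT_zero (k : Fin N) : VarsLT k (0 : MvPolynomial (Fin N) A) := by
  intro m hm
  simp at hm

lemma varsLT_mul (k : Fin N) (P Q : MvPolynomial (Fin N) A) (hP : VarsLT k P)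
    (hQ : VarsLT k Q) : VarsLT k (P * Q) := by
  intro m hm j hj
  have := MvPolynomial.support_mul P Q hm
  rw [Finset.mem_add] at this
  obtain ⟨a, ha, b, hb, rfl⟩ := this
  rw [Finsupp.add_apply, hP a ha j hj, hQ b hb j hj]

lemma varsLT_sum (k : Fin N) {ι : Type*} (s : Finset ι) (f : ι → MvPolynomial (Fin N) A)
    (hf : ∀ i ∈ s, VarsLT k (f i)) : VarsLT k (∑ i ∈ s, f i) :=
  Finset.sum_induction f (VarsLT k) (varsLT_add k) (varsLT_zero k) hf

lemma varsLT_pow (k : Fin N) (P : MvPolynomial (Fin N) A) (hP : VarsLT k P) (n : ℕ) :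
    VarsLT k (P ^ n) := by
  induction n with
  | zero => simpa [pow_zero] using varsLT_C k (1 : A)
  | succ n ih => rw [pow_succ]; exact varsLT_mul k _ _ ih hP

/-- The quotient map. -/
noncomputable abbrev mkq : MvPolynomial (Fin N) A →+* AlgD d :=
  Ideal.Quotient.mk (Ideal.span (Set.range (Qrel d)))

lemma mkq_Qrel (i : Fin N) : mkq d (Qrel d i) = 0 :=
  Ideal.Quotient.eq_zero_iff_mem.2 (Ideal.subset_span ⟨i, rfl⟩)

lemma Qrel_eq (i : Fin N) : Qrel d i = X i ^ 2 - X i * Bfull d i := by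
  have h : X i * Bfull d i
      = C (d i i) * X i
        + ∑ l ∈ Finset.univ.filter (fun l => l < i), C (d l i) * (X l * X i) := by
    rw [Bfull, mul_add, Finset.mul_sum]
    congr 1
    · ring
    · exact Finset.sum_congr rfl fun l _ => by ring
  rw [Qrel, h]
  ring

lemma mkq_X_sq (i : Fin N) : mkq d (X i ^ 2) = mkq d (X i * Bfull d i) := by
  rw [← sub_eq_zero, ← map_sub, ← Qrel_eq]
  exact mkq_Qrel d i

lemma mkq_X_pow (i : Fin N) (s : ℕ) :
    mkq d (X i ^ (s + 1)) = mkq d (X i * Bfull d i ^ s) := by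
  induction s with
  | zero => rw [pow_one, pow_zero, mul_one]
  | succ s ih =>
    have h1 : (X i : MvPolynomial (Fin N) A) ^ (s + 1 + 1) = X i * X i ^ (s + 1) := by ring
    have h2 : (X i : MvPolynomial (Fin N) A) * (X i * Bfull d i ^ s)
        = X i ^ 2 * Bfull d i ^ s := by ring
    rw [h1, map_mul, ih, ← map_mul, h2, map_mul, mkq_X_sq, ← map_mul]
    congr 1
    ring

lemma mkq_monomial (m : Fin N →₀ ℕ) (h0 : m.support.Nonempty) :
    mkq d (monomial m 1) =
      mkq d (X (m.support.max' h0)) *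
        mkq d (monomial (Finsupp.erase (m.support.max' h0) m) 1 *
          Bfull d (m.support.max' h0) ^ (m (m.support.max' h0) - 1)) := by
  set i := m.support.max' h0 with hidef
  have hi : m i ≠ 0 := Finsupp.mem_support_iff.1 (m.support.max'_mem h0)
  have hm : Finsupp.erase i m + Finsupp.single i (m i) = m := Finsupp.erase_add_single i m
  have h1 : monomial (Finsupp.erase i m) (1:A) * X i ^ (m i) = monomial m 1 := by
    rw [← monomial_add_single, hm]
  obtain ⟨s, hs⟩ : ∃ s, m i = s + 1 := ⟨m i - 1, by omega⟩
  rw [← h1, hs, map_mul, mkq_X_pow]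
  simp only [map_mul]
  rw [Nat.add_sub_cancel]
  ring

lemma xPowD_eq_mkq (ε : Fin N → Bool) : xPowD d ε = mkq d (XPow ε) := by
  rw [xPowD, XPow, map_prod]
  rfl

lemma xPowD_insert (ε' : Fin N → Bool) (i : Fin N) (hi : ε' i = false) :
    xPowD d (Function.update ε' i true) = xD d i * xPowD d ε' := by
  rw [xPowD, xPowD]
  have h : suppE (Function.update ε' i true) = insert i (suppE ε') := by
    ext j
    rcases eq_or_ne j i with rfl | hj
    · simp [Function.update_self]
    · simp [Function.update_of_ne hj, hj]
  rw [show Finset.univ.filter (fun j => Function.update ε' i true j = true)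
        = insert i (suppE ε') from h,
      Finset.prod_insert (by simp [hi])]

lemma mkq_C_mul (a : A) (p : MvPolynomial (Fin N) A) :
    mkq d (C a * p) = a • mkq d p := by
  rw [← MvPolynomial.smul_eq_C_mul]
  exact map_smul (Ideal.Quotient.mkₐ A _) a p

end Quot

section Main
variable {A : Type*} [CommRing A] {N : ℕ} (d : Fin N → Fin N → A)

lemma Tcoef_sum (ε : Fin N → Bool) {ι : Type*} (s : Finset ι)
    (f : ι → MvPolynomial (Fin N) A) :
    Tcoef d ε (∑ l ∈ s, f l) = ∑ l ∈ s, Tcoef d ε (f l) :=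
  map_sum (AddMonoidHom.mk' (Tcoef d ε) (Tcoef_add d ε)) f s

lemma mkq_X (i : Fin N) : mkq d (X i) = xD d i := rfl

lemma key_of_monomials (P : MvPolynomial (Fin N) A)
    (h : ∀ m ∈ P.support, mkq d (monomial m 1)
        = ∑ ε : Fin N → Bool, Tcoef d ε (monomial m 1) • xPowD d ε) :
    mkq d P = ∑ ε : Fin N → Bool, Tcoef d ε P • xPowD d ε := by
  conv_lhs => rw [as_sum P]
  rw [map_sum]
  have h1 : ∀ m ∈ P.support, mkq d (monomial m (P.coeff m))
      = ∑ ε : Fin N → Bool, (P.coeff m * Tcoef d ε (monomial m 1)) • xPowD d ε := by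
    intro m hm
    have h2 : (monomial m) (P.coeff m) = C (P.coeff m) * monomial m 1 := by
      rw [C_mul_monomial, mul_one]
    rw [h2, mkq_C_mul, h m hm, Finset.smul_sum]
    exact Finset.sum_congr rfl fun ε _ => by rw [smul_smul]
  rw [Finset.sum_congr rfl h1, Finset.sum_comm]
  refine Finset.sum_congr rfl fun ε _ => ?_
  rw [← Finset.sum_smul, ← Tcoef_eq_sum_subset d ε P P.support (subset_refl _)]

end Main

section Main2
variable {A : Type*} [CommRing A] {N : ℕ} (d : Fin N → Fin N → A)

lemma key_monomial : ∀ (k : ℕ) (m : Fin N →₀ ℕ), (∀ j ∈ m.support, (j : ℕ) < k) →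
    mkq d (monomial m 1) = ∑ ε : Fin N → Bool, Tcoef d ε (monomial m 1) • xPowD d ε := by
  intro k
  induction k with
  | zero =>
    intro m hm
    have hm0 : m = 0 := by
      ext j
      by_contra hj
      exact absurd (hm j (Finsupp.mem_support_iff.2 hj)) (by omega)
    subst hm0
    rw [Fintype.sum_eq_single (fun _ => false)]
    · have hT : Tcoef d (fun _ => false) (monomial (0 : Fin N →₀ ℕ) (1:A)) = 1 := by
        have hcard : (suppE (fun _ : Fin N => false)).card = 0 := by simp
        rw [Tcoef, hcard, TcoefAux]
        classical
        rw [coeff_monomial, if_pos rfl]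
      have hx : xPowD d (fun _ => false) = 1 := by
        rw [xPowD]
        simp
      rw [hT, hx, one_smul, monomial_zero', C_1, map_one]
    · intro ε hε
      have hex : ∃ j0, ε j0 = true := by
        by_contra hno
        push_neg at hno
        exact hε (funext fun j => Bool.eq_false_iff.2 (hno j))
      obtain ⟨j0, hj0⟩ := hex
      have hne : (suppE ε).Nonempty := ⟨j0, by simp [hj0]⟩
      rw [Tcoef_monomial_eq_zero_of_top d ε 0 hne (by simp), zero_smul]
  | succ k ih =>
    intro m hm
    by_cases h0 : m.support.Nonempty
    · obtain ⟨i, hidef⟩ : ∃ i, m.support.max' h0 = i := ⟨_, rfl⟩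
      have hik : (i : ℕ) < k + 1 := hm i (hidef ▸ m.support.max'_mem h0)
      have hjle : ∀ j ∈ m.support, j ≤ i := fun j hj => hidef ▸ Finset.le_max' _ j hj
      have hmi : m i ≠ 0 := Finsupp.mem_support_iff.1 (hidef ▸ m.support.max'_mem h0)
      have hMk := mkq_monomial d m h0
      rw [hidef] at hMk
      have hvars : VarsLT i (monomial (Finsupp.erase i m) (1:A) * Bfull d i ^ (m i - 1)) := by
        apply varsLT_mul
        · refine varsLT_monomial i _ 1 (fun j hj => ?_)
          rcases eq_or_ne j i with rfl | hne
          · simp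
          · rw [Finsupp.erase_ne hne]
            by_contra hmj
            have := hjle j (Finsupp.mem_support_iff.2 hmj)
            have hij : i < j := lt_of_le_of_ne hj (fun h => hne h.symm)
            exact absurd this (not_le.2 hij)
        · refine varsLT_pow i _ ?_ _
          refine varsLT_add i _ _ (varsLT_C i _) ?_
          refine varsLT_sum i _ _ (fun l hl => ?_)
          refine varsLT_mul i _ _ (varsLT_C i _) (varsLT_X i l ?_)
          simpa using hl
      have hQIH : mkq d (monomial (Finsupp.erase i m) (1:A) * Bfull d i ^ (m i - 1))
          = ∑ ε : Fin N → Bool,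
              Tcoef d ε (monomial (Finsupp.erase i m) (1:A) * Bfull d i ^ (m i - 1))
                • xPowD d ε := by
        refine key_of_monomials d _ (fun m' hm' => ih m' (fun j hj => ?_))
        have hji : j < i := by
          by_contra hj2
          exact (Finsupp.mem_support_iff.1 hj) (hvars m' hm' j (not_lt.1 hj2))
        have : (j : ℕ) < (i : ℕ) := hji
        omega
      rw [hMk, hQIH]
      classical
      symm
      rw [mkq_X, Finset.mul_sum]
      simp only [mul_smul_comm]
      -- abbreviate
      have hzeroL : ∀ ε : Fin N → Bool, ¬ (ε i = true ∧ ∀ j, ε j = true → j ≤ i) →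
          Tcoef d ε (monomial m 1) = 0 := by
        intro ε hP
        by_cases h1 : ε i = true
        · push_neg at hP
          obtain ⟨j0, hj0, hij0⟩ := hP h1
          have hne : (suppE ε).Nonempty := ⟨j0, by simp [hj0]⟩
          refine Tcoef_monomial_eq_zero_of_top d ε m hne ?_
          have hmax : i < (suppE ε).max' hne :=
            lt_of_lt_of_le hij0 (Finset.le_max' _ j0 (by simp [hj0]))
          by_contra hmm
          exact absurd (hjle _ (Finsupp.mem_support_iff.2 hmm)) (not_le.2 hmax)
        · exact Tcoef_monomial_eq_zero_of_not_subset d ε m i (by simpa using h1) hmi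
      have hzeroR : ∀ ε : Fin N → Bool, ¬ (∀ j, ε j = true → j < i) →
          Tcoef d ε (monomial (Finsupp.erase i m) (1:A) * Bfull d i ^ (m i - 1)) = 0 := by
        intro ε hP
        push_neg at hP
        obtain ⟨j0, hj0, hij0⟩ := hP
        exact Tcoef_eq_zero_of_varsLT d ε i j0 hj0 hij0 _ hvars
      rw [← Finset.sum_filter_of_ne (s := Finset.univ)
          (p := fun ε : Fin N → Bool => ε i = true ∧ ∀ j, ε j = true → j ≤ i)
          (fun ε _ hne => by
            by_contra hP
            exact hne (by rw [hzeroL ε hP, zero_smul])),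
        ← Finset.sum_filter_of_ne (s := Finset.univ)
          (p := fun ε : Fin N → Bool => ∀ j, ε j = true → j < i)
          (fun ε _ hne => by
            by_contra hP
            exact hne (by rw [hzeroR ε hP, zero_smul]))]
      refine Finset.sum_nbij' (fun ε => Function.update ε i false)
        (fun ε => Function.update ε i true) ?_ ?_ ?_ ?_ ?_
      · intro ε hε
        rw [Finset.mem_filter] at hε ⊢
        refine ⟨Finset.mem_univ _, fun j hj => ?_⟩
        simp only [Function.update_apply] at hj
        rcases eq_or_ne j i with rfl | hji
        · rw [if_pos rfl] at hj
          exact absurd hj (by simp)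
        · rw [if_neg hji] at hj
          exact lt_of_le_of_ne (hε.2.2 j hj) hji
      · intro ε hε
        rw [Finset.mem_filter] at hε ⊢
        refine ⟨Finset.mem_univ _, ?_, fun j hj => ?_⟩
        · simp
        · simp only [Function.update_apply] at hj
          rcases eq_or_ne j i with rfl | hji
          · exact le_rfl
          · rw [if_neg hji] at hj
            exact le_of_lt (hε.2 j hj)
      · intro ε hε
        rw [Finset.mem_filter] at hε
        funext j
        rcases eq_or_ne j i with rfl | hji
        · simp [Function.update_apply, hε.2.1]
        · simp [Function.update_apply, hji]
      · intro ε hε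
        rw [Finset.mem_filter] at hε
        have hεi : ε i = false := by
          by_contra hc
          have : ε i = true := by simpa using hc
          exact absurd (hε.2 i this) (lt_irrefl i)
        funext j
        rcases eq_or_ne j i with rfl | hji
        · simp [Function.update_apply, hεi]
        · simp [Function.update_apply, hji]
      · intro ε hε
        beta_reduce
        rw [Finset.mem_filter] at hε
        obtain ⟨-, hεi, hεle⟩ := hε
        have hupd : Function.update (Function.update ε i false) i true = ε := by
          funext j
          rcases eq_or_ne j i with rfl | hji
          · rw [Function.update_self, hεi]
          · rw [Function.update_of_ne hji, Function.update_of_ne hji]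
        have hx : xPowD d ε = xD d i * xPowD d (Function.update ε i false) := by
          conv_lhs => rw [← hupd]
          exact xPowD_insert d _ i (Function.update_self i false ε)
        have hT : Tcoef d ε (monomial m 1)
            = Tcoef d (Function.update ε i false)
                (monomial (Finsupp.erase i m) (1:A) * Bfull d i ^ (m i - 1)) := by
          by_cases hsub : ∀ j, ε j = false → m j = 0
          · have hne : (suppE ε).Nonempty := ⟨i, by simp [hεi]⟩
            have hmax : (suppE ε).max' hne = i :=
              le_antisymm (Finset.max'_le _ _ _ (fun j hj => hεle j (by simpa using hj)))
                (Finset.le_max' _ i (by simp [hεi]))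
            have hstep := Tcoef_monomial_step d ε m hne hsub (by rw [hmax]; omega)
            rw [hmax] at hstep
            rw [hstep]
            -- bridge from restricted sum to full sum
            have hsplit : Bfull d i = Brestr d ε i
                + ∑ l ∈ Finset.univ.filter (fun l => l < i ∧ ¬ (ε l = true)),
                    C (d l i) * X l := by
              rw [Bfull, Brestr, add_assoc]
              congr 1
              rw [← Finset.sum_filter_add_sum_filter_not
                    (Finset.univ.filter (fun l => l < i)) (fun l => ε l = true)
                    (fun l => C (d l i) * X l)]
              congr 1
              · congr 1
                ext l
                simp [and_comm]
              · congr 1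
                ext l
                simp [and_comm]
            obtain ⟨c, hc⟩ := sub_dvd_pow_sub_pow (Bfull d i) (Brestr d ε i) (m i - 1)
            have hR : Bfull d i - Brestr d ε i
                = ∑ l ∈ Finset.univ.filter (fun l => l < i ∧ ¬ (ε l = true)),
                    C (d l i) * X l := by
              rw [hsplit]
              ring
            have hz : Tcoef d (Function.update ε i false)
                (monomial (Finsupp.erase i m) (1:A) *
                  (Bfull d i ^ (m i - 1) - Brestr d ε i ^ (m i - 1))) = 0 := by
              rw [hc, hR, Finset.sum_mul, Finset.mul_sum]
              rw [Tcoef_sum]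
              refine Finset.sum_eq_zero fun l hl => ?_
              rw [Finset.mem_filter] at hl
              obtain ⟨-, hli, hεl⟩ := hl
              have hupdl : Function.update ε i false l = false := by
                rw [Function.update_of_ne (ne_of_lt hli)]
                simpa using hεl
              have hre : monomial (Finsupp.erase i m) (1:A) * (C (d l i) * X l * c)
                  = C (d l i) * (X l * (monomial (Finsupp.erase i m) (1:A) * c)) := by
                ring
              rw [hre, Tcoef_C_mul, Tcoef_mul_X_eq_zero d _ l hupdl, mul_zero]
            have h2 : Tcoef d (Function.update ε i false)
                  (monomial (Finsupp.erase i m) (1:A) * Bfull d i ^ (m i - 1))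
                - Tcoef d (Function.update ε i false)
                  (monomial (Finsupp.erase i m) (1:A) * Brestr d ε i ^ (m i - 1)) = 0 := by
              rw [← Tcoef_sub, ← mul_sub]
              exact hz
            exact (sub_eq_zero.1 h2).symm
          · push_neg at hsub
            obtain ⟨j0, hj0, hmj0⟩ := hsub
            have hj0i : j0 ≠ i := by
              intro h
              rw [h, hεi] at hj0
              exact absurd hj0 (by simp)
            rw [Tcoef_monomial_eq_zero_of_not_subset d ε m j0 hj0 hmj0,
              Tcoef_monomial_mul_eq_zero d (Function.update ε i false)
                (Finsupp.erase i m) j0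
                (by rw [Function.update_of_ne hj0i]; exact hj0)
                (by rw [Finsupp.erase_ne hj0i]; exact hmj0) _]
        rw [hT, hx]
    · refine ih m (fun j hj => ?_)
      rw [Finset.not_nonempty_iff_eq_empty.1 h0] at hj
      simp at hj

end Main2


/-- For every polynomial `P`, the coordinates of the image of `P` in `𝒜_D` on the
basis `{x^ε}` are given by `T^ε(P)`; in particular the structure constants of `𝒜_D`
are `q_{ε₁,ε₂}^ε = T^ε(X^{ε₁}·X^{ε₂})`. -/
theorem Tcoef_spec {A : Type*} [CommRing A] {N : ℕ} (hN : 1 ≤ N)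
    (d : Fin N → Fin N → A) :
    (∀ P : MvPolynomial (Fin N) A,
        Ideal.Quotient.mk (Ideal.span (Set.range (Qrel d))) P
          = ∑ ε : Fin N → Bool, Tcoef d ε P • xPowD d ε) ∧
    (∀ ε₁ ε₂ : Fin N → Bool,
        xPowD d ε₁ * xPowD d ε₂
          = ∑ ε : Fin N → Bool, Tcoef d ε (XPow ε₁ * XPow ε₂) • xPowD d ε) := by
  have key : ∀ P : MvPolynomial (Fin N) A,
      mkq d P = ∑ ε : Fin N → Bool, Tcoef d ε P • xPowD d ε := fun P =>
    key_of_monomials d P fun m _ => key_monomial d N m fun j _ => j.isLt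
  refine ⟨key, fun ε₁ ε₂ => ?_⟩
  rw [xPowD_eq_mkq, xPowD_eq_mkq, ← map_mul]
  exact key _
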